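/- For every real number p with 1 < p ≤ 2 there exists a constant d > 0 such that for all vectors x, y ∈ ℝ^N, one has ‖|x|^{p-2} x − |y|^{p-2} y‖ ≤ d ‖x − y‖^{p-1} (where |x|^{p-2} x is interpreted as 0 when x = 0). -/

import Mathlib

open Real

/-- Scalar inequality: for `0 ≤ q ≤ 1`, `0 < a ≤ b ≤ 2a`, `b - a ≤ δ ≤ a`,
`(a^(-q) - b^(-q)) * b ≤ 2 * δ^(1-q)`. -/
lemma aux_scalar (q a b δ : ℝ) (hq0 : 0 ≤ q) (hq1 : q ≤ 1) (ha : 0 < a) (hab : a ≤ b)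
    (hba : b - a ≤ δ) (hδa : δ ≤ a) (hb2a : b ≤ 2 * a) (hδ : 0 < δ) :
    (a ^ (-q) - b ^ (-q)) * b ≤ 2 * δ ^ (1 - q) := by
  have hb : 0 < b := lt_of_lt_of_le ha hab
  have hs : (-1 : ℝ) ≤ (b - a) / a := by
    have : (0:ℝ) ≤ (b - a) / a := div_nonneg (by linarith) ha.le
    linarith
  have hber : (b / a) ^ q ≤ 1 + q * ((b - a) / a) := by
    have h1 : 1 + (b - a) / a = b / a := by field_simp; ring
    rw [← h1]
    exact rpow_one_add_le_one_add_mul_self hs hq0 hq1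
  have hid : a ^ (-q) = b ^ (-q) * (b / a) ^ q := by
    rw [Real.div_rpow hb.le ha.le, Real.rpow_neg hb.le, Real.rpow_neg ha.le]
    field_simp
  have hkey : a ^ (-q) - b ^ (-q) ≤ b ^ (-q) * (q * ((b - a) / a)) := by
    have hnn : (0:ℝ) ≤ b ^ (-q) := Real.rpow_nonneg hb.le _
    calc a ^ (-q) - b ^ (-q) = b ^ (-q) * ((b / a) ^ q - 1) := by rw [hid]; ring
      _ ≤ b ^ (-q) * (q * ((b - a) / a)) := by
          apply mul_le_mul_of_nonneg_left _ hnn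
          linarith
  have hmono : b ^ (-q) ≤ δ ^ (-q) :=
    Real.rpow_le_rpow_of_nonpos hδ (hδa.trans hab) (by linarith)
  have hE : δ ^ (1 - q) = δ ^ (-q) * δ := by
    rw [show (1 - q : ℝ) = -q + 1 by ring, Real.rpow_add_one hδ.ne']
  have hdnn : (0:ℝ) ≤ δ ^ (-q) := Real.rpow_nonneg hδ.le _
  calc (a ^ (-q) - b ^ (-q)) * b ≤ (b ^ (-q) * (q * ((b - a) / a))) * b :=
        mul_le_mul_of_nonneg_right hkey hb.le
    _ = b ^ (-q) * q * (b - a) * (b / a) := by ring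
    _ ≤ δ ^ (-q) * 1 * δ * 2 := by
        have h1 : b / a ≤ 2 := by rw [div_le_iff₀ ha]; linarith
        have h2 : (0:ℝ) ≤ b - a := by linarith
        have h3 : (0:ℝ) ≤ b / a := div_nonneg hb.le ha.le
        have : b ^ (-q) * q ≤ δ ^ (-q) * 1 :=
          mul_le_mul hmono hq1 hq0 hdnn
        calc b ^ (-q) * q * (b - a) * (b / a)
            ≤ δ ^ (-q) * 1 * δ * (b / a) := by
              apply mul_le_mul_of_nonneg_right _ h3
              apply mul_le_mul this hba h2 (by linarith [hdnn])
          _ ≤ δ ^ (-q) * 1 * δ * 2 := by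
              apply mul_le_mul_of_nonneg_left h1
              positivity
    _ = 2 * (δ ^ (-q) * δ) := by ring
    _ = 2 * δ ^ (1 - q) := by rw [hE]

/-- Norm of the map `h_p`. -/
lemma aux_norm {E : Type*} [NormedAddCommGroup E] [NormedSpace ℝ E] (p : ℝ) (hp1 : 1 < p)
    (z : E) : ‖(‖z‖ ^ (p - 2)) • z‖ = ‖z‖ ^ (p - 1) := by
  by_cases hz : z = 0
  · simp [hz, Real.zero_rpow (show p - 1 ≠ 0 by linarith)]
  · rw [norm_smul, Real.norm_eq_abs, abs_of_nonneg (Real.rpow_nonneg (norm_nonneg z) _),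
      ← Real.rpow_add_one (norm_ne_zero_iff.2 hz)]
    ring_nf

/-- One-sided key estimate. -/
lemma aux_key {E : Type*} [NormedAddCommGroup E] [NormedSpace ℝ E] (p : ℝ) (hp1 : 1 < p)
    (hp2 : p ≤ 2) (x y : E) (hxy : ‖y‖ ≤ ‖x‖) :
    ‖(‖x‖ ^ (p - 2)) • x - (‖y‖ ^ (p - 2)) • y‖ ≤ 5 * ‖x - y‖ ^ (p - 1) := by
  by_cases heq : x = y
  · subst heq
    simp only [sub_self, norm_zero]
    positivity
  have hδ : 0 < ‖x - y‖ := by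
    rw [norm_pos_iff]
    exact sub_ne_zero.2 heq
  have hp1' : (0:ℝ) ≤ p - 1 := by linarith
  have hRnn : (0:ℝ) ≤ ‖x - y‖ ^ (p - 1) := Real.rpow_nonneg hδ.le _
  rcases le_or_gt ‖x‖ (2 * ‖x - y‖) with hb | hb
  · -- large-difference case
    calc ‖(‖x‖ ^ (p - 2)) • x - (‖y‖ ^ (p - 2)) • y‖
        ≤ ‖(‖x‖ ^ (p - 2)) • x‖ + ‖(‖y‖ ^ (p - 2)) • y‖ := norm_sub_le _ _
      _ = ‖x‖ ^ (p - 1) + ‖y‖ ^ (p - 1) := by rw [aux_norm p hp1, aux_norm p hp1]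
      _ ≤ 2 * ‖x‖ ^ (p - 1) := by
          have := Real.rpow_le_rpow (norm_nonneg y) hxy hp1'
          linarith
      _ ≤ 2 * (2 * ‖x - y‖) ^ (p - 1) := by
          have := Real.rpow_le_rpow (norm_nonneg x) hb hp1'
          linarith
      _ = 2 * ((2:ℝ) ^ (p - 1) * ‖x - y‖ ^ (p - 1)) := by
          rw [Real.mul_rpow (by norm_num) hδ.le]
      _ ≤ 2 * (2 * ‖x - y‖ ^ (p - 1)) := by
          have h2 : (2:ℝ) ^ (p - 1) ≤ 2 := by
            calc (2:ℝ) ^ (p - 1) ≤ (2:ℝ) ^ (1:ℝ) :=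
                  Real.rpow_le_rpow_of_exponent_le one_le_two (by linarith)
              _ = 2 := Real.rpow_one 2
          nlinarith
      _ ≤ 5 * ‖x - y‖ ^ (p - 1) := by linarith
  · -- small-difference case
    have hnorm : ‖x‖ - ‖y‖ ≤ ‖x - y‖ := norm_sub_norm_le x y
    have hy : 0 < ‖y‖ := by linarith
    have hδy : ‖x - y‖ ≤ ‖y‖ := by linarith
    have hdec : (‖x‖ ^ (p - 2)) • x - (‖y‖ ^ (p - 2)) • y
        = (‖y‖ ^ (p - 2)) • (x - y) + ((‖x‖ ^ (p - 2)) - (‖y‖ ^ (p - 2))) • x := by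
      rw [smul_sub, sub_smul]; abel
    have hT1 : ‖(‖y‖ ^ (p - 2)) • (x - y)‖ ≤ ‖x - y‖ ^ (p - 1) := by
      rw [norm_smul, Real.norm_eq_abs, abs_of_nonneg (Real.rpow_nonneg hy.le _)]
      have h1 : ‖y‖ ^ (p - 2) ≤ ‖x - y‖ ^ (p - 2) :=
        Real.rpow_le_rpow_of_nonpos hδ hδy (by linarith)
      calc ‖y‖ ^ (p - 2) * ‖x - y‖ ≤ ‖x - y‖ ^ (p - 2) * ‖x - y‖ :=
            mul_le_mul_of_nonneg_right h1 hδ.le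
        _ = ‖x - y‖ ^ (p - 1) := by
            rw [show (p - 1 : ℝ) = (p - 2) + 1 by ring, Real.rpow_add_one hδ.ne']
    have hT2 : ‖((‖x‖ ^ (p - 2)) - (‖y‖ ^ (p - 2))) • x‖ ≤ 2 * ‖x - y‖ ^ (p - 1) := by
      rw [norm_smul, Real.norm_eq_abs]
      have hle : ‖x‖ ^ (p - 2) ≤ ‖y‖ ^ (p - 2) :=
        Real.rpow_le_rpow_of_nonpos hy hxy (by linarith)
      rw [abs_of_nonpos (by linarith)]
      have := aux_scalar (2 - p) ‖y‖ ‖x‖ ‖x - y‖ (by linarith) (by linarith) hy hxy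
        hnorm hδy (by linarith) hδ
      have e1 : (p - 2 : ℝ) = -(2 - p) := by ring
      have e2 : (p - 1 : ℝ) = 1 - (2 - p) := by ring
      rw [e1, e2]
      linarith
    calc ‖(‖x‖ ^ (p - 2)) • x - (‖y‖ ^ (p - 2)) • y‖
        ≤ ‖(‖y‖ ^ (p - 2)) • (x - y)‖ + ‖((‖x‖ ^ (p - 2)) - (‖y‖ ^ (p - 2))) • x‖ := by
          rw [hdec]; exact norm_add_le _ _
      _ ≤ 5 * ‖x - y‖ ^ (p - 1) := by linarith

/-- For every real `p` with `1 < p ≤ 2` there is `d > 0` such that for all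
`x y : ℝ^N`, `‖‖x‖^(p-2) • x - ‖y‖^(p-2) • y‖ ≤ d * ‖x - y‖^(p-1)`. -/
theorem stmt0 (p : ℝ) (hp1 : 1 < p) (hp2 : p ≤ 2) (N : ℕ) :
    ∃ d : ℝ, 0 < d ∧ ∀ x y : EuclideanSpace ℝ (Fin N),
      ‖(‖x‖ ^ (p - 2)) • x - (‖y‖ ^ (p - 2)) • y‖ ≤ d * ‖x - y‖ ^ (p - 1) := by
  refine ⟨5, by norm_num, fun x y => ?_⟩
  rcases le_total ‖y‖ ‖x‖ with h | h
  · exact aux_key p hp1 hp2 x y h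
  · have := aux_key p hp1 hp2 y x h
    rwa [norm_sub_rev ((‖y‖ ^ (p - 2)) • y), norm_sub_rev y x] at this
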